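/- (Universal detectability from the observer metric condition.) Let f : ℝⁿ → ℝⁿ be continuously differentiable with Jacobian A(x), B an n×m real matrix, C a p×n real matrix, W symmetric positive definite, λ > 0, and ρ : ℝⁿ → ℝ continuous with ρ(x) ≥ 0 for all x. Suppose A(x)ᵀ·W + W·A(x) - ρ(x)·Cᵀ·C ⪯ -2λW for all x ∈ ℝⁿ. Then for any continuous u : [0,∞) → ℝᵐ, any two solutions x₁, x₂ of ẋ = f(x) + B·u(t) whose outputs coincide, C·x₁(t) = C·x₂(t) for all t ≥ 0, satisfy (x₁(t)-x₂(t))ᵀ·W·(x₁(t)-x₂(t)) ≤ e^{-2λt}·(x₁(0)-x₂(0))ᵀ·W·(x₁(0)-x₂(0)); i.e. indistinguishable trajectories converge exponentially, so the system is universally detectable. -/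

import Mathlib

open Matrix

private lemma hasDerivAt_dot' {n : ℕ} {a b : ℝ → Fin n → ℝ} {a' b' : Fin n → ℝ} {t : ℝ}
    (ha : HasDerivAt a a' t) (hb : HasDerivAt b b' t) :
    HasDerivAt (fun t => a t ⬝ᵥ b t) (a' ⬝ᵥ b t + a t ⬝ᵥ b') t := by
  have hco : ∀ i : Fin n, HasDerivAt (fun t => a t i * b t i)
      (a' i * b t i + a t i * b' i) t := by
    intro i
    have hai : HasDerivAt (fun t => a t i) (a' i) t :=
      ((ContinuousLinearMap.proj i : (Fin n → ℝ) →L[ℝ] ℝ).hasFDerivAt).comp_hasDerivAt t ha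
    have hbi : HasDerivAt (fun t => b t i) (b' i) t :=
      ((ContinuousLinearMap.proj i : (Fin n → ℝ) →L[ℝ] ℝ).hasFDerivAt).comp_hasDerivAt t hb
    exact hai.mul hbi
  have := HasDerivAt.fun_sum (u := Finset.univ) (fun i _ => hco i)
  simpa [dotProduct, Finset.sum_add_distrib] using this

private lemma hasDerivAt_mulVec' {n : ℕ} (W : Matrix (Fin n) (Fin n) ℝ)
    {e : ℝ → Fin n → ℝ} {e' : Fin n → ℝ} {t : ℝ} (he : HasDerivAt e e' t) :
    HasDerivAt (fun t => W.mulVec (e t)) (W.mulVec e') t := by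
  have := ((LinearMap.toContinuousLinearMap
      (Matrix.mulVecLin W)).hasFDerivAt).comp_hasDerivAt t he
  simpa [Function.comp_def] using this

private lemma dot_symm' {n : ℕ} {W : Matrix (Fin n) (Fin n) ℝ} (hWs : Wᵀ = W)
    (x y : Fin n → ℝ) : x ⬝ᵥ W.mulVec y = y ⬝ᵥ W.mulVec x := by
  rw [dotProduct_mulVec, ← Matrix.mulVec_transpose, hWs, dotProduct_comm]

private lemma key_ineq' {n p : ℕ} {W : Matrix (Fin n) (Fin n) ℝ} (hWs : Wᵀ = W)
    {C : Matrix (Fin p) (Fin n) ℝ} {lam : ℝ} {ρx : ℝ}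
    {M : Matrix (Fin n) (Fin n) ℝ}
    (h : ((-(2 * lam)) • W - (Mᵀ * W + W * M - ρx • (Cᵀ * C))).PosSemidef)
    {e : Fin n → ℝ} (hCe : C.mulVec e = 0) :
    e ⬝ᵥ W.mulVec (M.mulVec e) ≤ -lam * (e ⬝ᵥ W.mulVec e) := by
  have h0 : (0:ℝ) ≤ e ⬝ᵥ (((-(2 * lam)) • W - (Mᵀ * W + W * M - ρx • (Cᵀ * C))).mulVec e) := by
    simpa using h.dotProduct_mulVec_nonneg e
  have h1 : e ⬝ᵥ (Mᵀ * W).mulVec e = e ⬝ᵥ W.mulVec (M.mulVec e) := by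
    rw [← Matrix.mulVec_mulVec, dotProduct_mulVec e Mᵀ, ← Matrix.mulVec_transpose,
      transpose_transpose, dot_symm' hWs]
  have h2 : e ⬝ᵥ (W * M).mulVec e = e ⬝ᵥ W.mulVec (M.mulVec e) := by
    rw [← Matrix.mulVec_mulVec]
  have h3 : e ⬝ᵥ (Cᵀ * C).mulVec e = 0 := by
    rw [← Matrix.mulVec_mulVec, hCe, Matrix.mulVec_zero, dotProduct_zero]
  simp only [Matrix.sub_mulVec, Matrix.add_mulVec, Matrix.smul_mulVec, dotProduct_sub,
    dotProduct_add, dotProduct_smul] at h0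
  rw [h1, h2, h3] at h0
  simp only [smul_eq_mul, mul_zero] at h0
  linarith

private lemma segment_bound' {n p : ℕ}
    (f : (Fin n → ℝ) → (Fin n → ℝ))
    (A : (Fin n → ℝ) → Matrix (Fin n) (Fin n) ℝ)
    (hf : ∀ x : Fin n → ℝ,
      HasFDerivAt f ((Matrix.toLin' (A x)).toContinuousLinearMap) x)
    {C : Matrix (Fin p) (Fin n) ℝ}
    {W : Matrix (Fin n) (Fin n) ℝ} (hWs : Wᵀ = W)
    {lam : ℝ} {ρ : (Fin n → ℝ) → ℝ}
    (hLMI : ∀ x : Fin n → ℝ,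
      ((-(2 * lam)) • W - ((A x)ᵀ * W + W * A x - ρ x • (Cᵀ * C))).PosSemidef)
    (x2 e : Fin n → ℝ) (hCe : C.mulVec e = 0) :
    e ⬝ᵥ W.mulVec (f (x2 + e) - f x2) ≤ -lam * (e ⬝ᵥ W.mulVec e) := by
  set L : ℝ := lam * (e ⬝ᵥ W.mulVec e) with hL
  set c : ℝ → (Fin n → ℝ) := fun s => x2 + s • e with hc
  set ψ : ℝ → ℝ := fun s => e ⬝ᵥ W.mulVec (f (c s)) + L * s with hψdef
  have hψ : ∀ s : ℝ, HasDerivAt ψ (e ⬝ᵥ W.mulVec ((A (c s)).mulVec e) + L) s := by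
    intro s
    have hcd : HasDerivAt c e s := by
      have := ((hasDerivAt_id s).smul_const e).const_add x2
      rw [one_smul] at this
      exact this
    have hfc : HasDerivAt (fun s => f (c s)) ((A (c s)).mulVec e) s := by
      have := (hf (c s)).comp_hasDerivAt s hcd
      simpa [Function.comp_def, Matrix.toLin'_apply] using this
    have hWfc := hasDerivAt_mulVec' W hfc
    have hdot : HasDerivAt (fun s => e ⬝ᵥ W.mulVec (f (c s)))
        (e ⬝ᵥ W.mulVec ((A (c s)).mulVec e)) s := by
      simpa using hasDerivAt_dot' (hasDerivAt_const s e) hWfc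
    have hlin : HasDerivAt (fun s : ℝ => L * s) L s := by
      simpa using (hasDerivAt_id s).const_mul L
    exact hdot.add hlin
  have hψle : ∀ s : ℝ, e ⬝ᵥ W.mulVec ((A (c s)).mulVec e) + L ≤ 0 := by
    intro s
    have := key_ineq' hWs (hLMI (c s)) hCe
    simp only [hL]
    linarith
  have hanti : AntitoneOn ψ (Set.Icc 0 1) := by
    apply antitoneOn_of_deriv_nonpos (convex_Icc 0 1)
    · exact fun s _ => ((hψ s).continuousAt).continuousWithinAt
    · exact fun s _ => ((hψ s).differentiableAt).differentiableWithinAt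
    · intro s _
      rw [(hψ s).deriv]
      exact hψle s
  have h01 := hanti (Set.left_mem_Icc.2 zero_le_one) (Set.right_mem_Icc.2 zero_le_one)
    zero_le_one
  have hc0 : c 0 = x2 := by simp [hc]
  have hc1 : c 1 = x2 + e := by simp [hc]
  rw [hψdef] at h01
  simp only [hc0, hc1, mul_one, mul_zero, add_zero] at h01
  rw [Matrix.mulVec_sub, dotProduct_sub]
  linarith

/-- Universal detectability from the observer metric condition: if
`A(x)ᵀW + WA(x) - ρ(x)CᵀC ⪯ -2λW` for all `x`, then any two trajectories with identical
outputs converge to each other exponentially in the metric `W`. -/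
theorem universal_detectability {n m p : ℕ}
    (f : (Fin n → ℝ) → (Fin n → ℝ))
    (A : (Fin n → ℝ) → Matrix (Fin n) (Fin n) ℝ)
    (hf : ∀ x : Fin n → ℝ,
      HasFDerivAt f ((Matrix.toLin' (A x)).toContinuousLinearMap) x)
    (hA : Continuous A)
    (B : Matrix (Fin n) (Fin m) ℝ) (C : Matrix (Fin p) (Fin n) ℝ)
    (W : Matrix (Fin n) (Fin n) ℝ) (hW : W.PosDef)
    (lam : ℝ) (hlam : 0 < lam)
    (ρ : (Fin n → ℝ) → ℝ) (hρcont : Continuous ρ) (hρ : ∀ x, 0 ≤ ρ x)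
    (hLMI : ∀ x : Fin n → ℝ,
      ((-(2 * lam)) • W - ((A x)ᵀ * W + W * A x - ρ x • (Cᵀ * C))).PosSemidef)
    (u : ℝ → (Fin m → ℝ)) (hu : Continuous u)
    (x₁ x₂ : ℝ → (Fin n → ℝ))
    (h₁ : ∀ t : ℝ, 0 ≤ t → HasDerivAt x₁ (f (x₁ t) + B.mulVec (u t)) t)
    (h₂ : ∀ t : ℝ, 0 ≤ t → HasDerivAt x₂ (f (x₂ t) + B.mulVec (u t)) t)
    (hout : ∀ t : ℝ, 0 ≤ t → C.mulVec (x₁ t) = C.mulVec (x₂ t)) :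
    ∀ t : ℝ, 0 ≤ t →
      (x₁ t - x₂ t) ⬝ᵥ W.mulVec (x₁ t - x₂ t) ≤
        Real.exp (-(2 * lam) * t) * ((x₁ 0 - x₂ 0) ⬝ᵥ W.mulVec (x₁ 0 - x₂ 0)) := by
  intro t ht
  have hWs : Wᵀ = W := by exact (by simpa using hW.isHermitian : W.IsSymm).eq
  set e : ℝ → (Fin n → ℝ) := fun τ => x₁ τ - x₂ τ with he_def
  set V : ℝ → ℝ := fun τ => e τ ⬝ᵥ W.mulVec (e τ) with hV_def
  set G : ℝ → ℝ := fun τ => Real.exp (2 * lam * τ) * V τ with hG_def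
  -- derivative of G with a sign bound, at each τ ≥ 0
  have hGd : ∀ τ : ℝ, 0 ≤ τ → ∃ g, HasDerivAt G g τ ∧ g ≤ 0 := by
    intro τ hτ
    set e' : Fin n → ℝ := f (x₁ τ) - f (x₂ τ) with he'
    have he : HasDerivAt e e' τ := by
      have := (h₁ τ hτ).sub (h₂ τ hτ)
      simp only [add_sub_add_right_eq_sub] at this
      exact this
    have hV : HasDerivAt V (e' ⬝ᵥ W.mulVec (e τ) + e τ ⬝ᵥ W.mulVec e') τ :=
      hasDerivAt_dot' he (hasDerivAt_mulVec' W he)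
    have hCe : C.mulVec (e τ) = 0 := by
      simp only [he_def, Matrix.mulVec_sub, hout τ hτ, sub_self]
    have hseg : e τ ⬝ᵥ W.mulVec e' ≤ -lam * V τ := by
      have := segment_bound' f A hf hWs hLMI (x₂ τ) (e τ) hCe
      have hx1 : x₂ τ + e τ = x₁ τ := by simp [he_def]
      rw [hx1] at this
      simpa [he', hV_def] using this
    have hVle : e' ⬝ᵥ W.mulVec (e τ) + e τ ⬝ᵥ W.mulVec e' ≤ -(2 * lam) * V τ := by
      rw [dot_symm' hWs e' (e τ)]
      linarith
    have hE : HasDerivAt (fun τ => Real.exp (2 * lam * τ))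
        (Real.exp (2 * lam * τ) * (2 * lam)) τ := by
      simpa using ((hasDerivAt_id τ).const_mul (2 * lam)).exp
    have hG : HasDerivAt G
        (Real.exp (2 * lam * τ) * (2 * lam) * V τ +
          Real.exp (2 * lam * τ) * (e' ⬝ᵥ W.mulVec (e τ) + e τ ⬝ᵥ W.mulVec e')) τ :=
      hE.mul hV
    refine ⟨_, hG, ?_⟩
    have hep : (0:ℝ) < Real.exp (2 * lam * τ) := Real.exp_pos _
    nlinarith [hVle, hep]
  have hcont : ContinuousOn G (Set.Ici (0:ℝ)) := fun τ hτ =>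
    ((hGd τ hτ).choose_spec.1.continuousAt).continuousWithinAt
  have hdiff : DifferentiableOn ℝ G (interior (Set.Ici (0:ℝ))) := by
    rw [interior_Ici]
    exact fun τ hτ => ((hGd τ (le_of_lt hτ)).choose_spec.1.differentiableAt).differentiableWithinAt
  have hderiv : ∀ τ ∈ interior (Set.Ici (0:ℝ)), deriv G τ ≤ 0 := by
    rw [interior_Ici]
    intro τ hτ
    obtain ⟨g, hg, hgle⟩ := hGd τ hτ.le
    rw [hg.deriv]
    exact hgle
  have hanti := antitoneOn_of_deriv_nonpos (convex_Ici 0) hcont hdiff hderiv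
  have hGt : G t ≤ G 0 := hanti (Set.self_mem_Ici) (Set.mem_Ici.2 ht) ht
  have hG0 : G 0 = V 0 := by simp [hG_def]
  rw [hG0] at hGt
  have h1 : Real.exp (-(2 * lam) * t) * (Real.exp (2 * lam * t) * V t) ≤
      Real.exp (-(2 * lam) * t) * V 0 :=
    mul_le_mul_of_nonneg_left hGt (Real.exp_pos _).le
  have h2 : Real.exp (-(2 * lam) * t) * Real.exp (2 * lam * t) = 1 := by
    rw [← Real.exp_add]
    norm_num
  calc V t = Real.exp (-(2 * lam) * t) * Real.exp (2 * lam * t) * V t := by rw [h2, one_mul]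
    _ ≤ Real.exp (-(2 * lam) * t) * V 0 := by rw [mul_assoc]; exact h1
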